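/- Let (L₁, …, L_{k−1}, V_{G_k}; w₁, …, w_k) be a k-level vertex hierarchy on the weighted graph G = (V, w₁). Then for all s, t ∈ V: dist_G(s,t) = min( A , B ), where A = ⨅_{x ∈ Anc(s) ∩ Anc(t)} ( d(s,x) + d(t,x) ) and B = ⨅_{x ∈ Anc(s) ∩ V_{G_k}, y ∈ Anc(t) ∩ V_{G_k}} ( d(s,x) + dist_{w_k}(x,y) + d(t,y) ), with infima in ℕ∞ over empty index sets equal to ⊤. -/

import Mathlib

namespace ISLabel

variable {V : Type*}

/-- Two vertices are adjacent in the weighted graph `w` when they are distinct and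
joined by an edge of finite weight. -/
def Adj (w : V → V → ℕ∞) (u v : V) : Prop := u ≠ v ∧ w u v < ⊤

/-- `p` is a walk from `u` to `v` in the weighted graph `w`: a nonempty list of
vertices starting at `u`, ending at `v`, with consecutive vertices adjacent. -/
def IsWalk (w : V → V → ℕ∞) (u v : V) (p : List V) : Prop :=
  p ≠ [] ∧ p.head? = some u ∧ p.getLast? = some v ∧ p.Chain' (Adj w)

/-- The length of a list of vertices: the sum of `f` over consecutive pairs. -/
def pathLen (f : V → V → ℕ∞) (p : List V) : ℕ∞ :=
  ((p.zip p.tail).map fun e => f e.1 e.2).sum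

/-- The distance from `u` to `v` in `w`: the infimum of the lengths of all walks
from `u` to `v` (`⊤` if there is no such walk). -/
noncomputable def wdist (w : V → V → ℕ∞) (u v : V) : ℕ∞ :=
  ⨅ p : {p : List V // IsWalk w u v p}, pathLen w p.1

/-- `I` is an independent set in `w`. -/
def IsIndep (w : V → V → ℕ∞) (I : Set V) : Prop :=
  ∀ u ∈ I, ∀ v ∈ I, ¬ Adj w u v

/-- `w` is a weighted undirected graph: symmetric, and every off-diagonal value is
either `⊤` (no edge) or a weight `≥ 1`. -/
def IsWGraph (w : V → V → ℕ∞) : Prop :=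
  (∀ u v, w u v = w v u) ∧ ∀ u v, u ≠ v → 1 ≤ w u v

/-- `w` is supported on `S`: all weights touching a vertex outside `S` are `⊤`. -/
def SupportedOn (w : V → V → ℕ∞) (S : Set V) : Prop :=
  ∀ u v, u ∉ S ∨ v ∉ S → w u v = ⊤

/-- `VsetOf L i` is the vertex set `V_i = V ∖ (L₁ ∪ … ∪ L_{i-1})`. -/
def VsetOf (L : ℕ → Set V) (i : ℕ) : Set V := {v | ∀ j, 1 ≤ j → j < i → v ∉ L j}

/-- A `k`-level vertex hierarchy (`k ≥ 2`) on the weighted graph `w 1`: like a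
vertex hierarchy of height `k`, except that the top vertex set
`V_{G_k} = VsetOf L k` is not required to be independent in `w k`. -/
structure KLevelHierarchy (V : Type*) (k : ℕ) where
  L : ℕ → Set V
  w : ℕ → V → V → ℕ∞
  two_le : 2 ≤ k
  wgraph : ∀ i, 1 ≤ i → i ≤ k → IsWGraph (w i)
  disj : ∀ i j, 1 ≤ i → i < k → 1 ≤ j → j < k → i ≠ j → ∀ v, v ∈ L i → v ∉ L j
  supported : ∀ i, 1 ≤ i → i ≤ k → SupportedOn (w i) (VsetOf L i)
  aug : ∀ i, 2 ≤ i → i ≤ k → ∀ u v : V, u ≠ v → u ∈ VsetOf L i → v ∈ VsetOf L i →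
    w i u v = min (w (i - 1) u v) (⨅ x ∈ L (i - 1), w (i - 1) u x + w (i - 1) x v)
  indep : ∀ i, 1 ≤ i → i < k → IsIndep (w i) (L i)

/-- The level of a vertex: the unique `i < k` with `v ∈ L i`, and `k` for vertices
of the top vertex set `V_{G_k}`. -/
noncomputable def klevel {k : ℕ} (H : KLevelHierarchy V k) (v : V) : ℕ :=
  sInf {i | (1 ≤ i ∧ i < k ∧ v ∈ H.L i) ∨ i = k}

/-- One step of an ascending sequence in a `k`-level vertex hierarchy. -/
def kAscStep {k : ℕ} (H : KLevelHierarchy V k) (a b : V) : Prop :=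
  klevel H a < klevel H b ∧ Adj (H.w (klevel H a)) a b

/-- `p` is an ascending sequence from `v` to `u`. -/
def kIsAscending {k : ℕ} (H : KLevelHierarchy V k) (v u : V) (p : List V) : Prop :=
  p ≠ [] ∧ p.head? = some v ∧ p.getLast? = some u ∧ p.Chain' (kAscStep H)

/-- The set of ancestors of `v`. -/
def kAnc {k : ℕ} (H : KLevelHierarchy V k) (v : V) : Set V :=
  {u | ∃ p, kIsAscending H v u p}

/-- `d(v,u)` in a `k`-level vertex hierarchy. -/
noncomputable def kAncDist {k : ℕ} (H : KLevelHierarchy V k) (v u : V) : ℕ∞ :=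
  ⨅ p : {p : List V // kIsAscending H v u p},
    pathLen (fun a b => H.w (klevel H a) a b) p.1

section AuxLemmas

-- attainment
lemma exists_eq_iInf' {ι : Sort*} (f : ι → ℕ∞) (h : (⨅ i, f i) ≠ ⊤) :
    ∃ i, f i = ⨅ i, f i := by
  have h1 : (⨅ i, f i) < (⨅ i, f i) + 1 := (ENat.lt_add_one_iff h).mpr le_rfl
  obtain ⟨i, hi⟩ := iInf_lt_iff.mp h1
  exact ⟨i, le_antisymm ((ENat.lt_add_one_iff h).mp hi) (iInf_le f i)⟩

lemma exists_eq_biInf {α : Type*} {S : Set α} (f : α → ℕ∞) (h : (⨅ x ∈ S, f x) ≠ ⊤) :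
    ∃ x ∈ S, f x = ⨅ x ∈ S, f x := by
  have e : (⨅ x ∈ S, f x) = ⨅ x : S, f x.1 := by rw [iInf_subtype]
  rw [e] at h ⊢
  obtain ⟨⟨x, hx⟩, hfx⟩ := exists_eq_iInf' _ h
  exact ⟨x, hx, hfx⟩

@[simp] lemma pathLen_nil (f : V → V → ℕ∞) : pathLen f ([] : List V) = 0 := rfl
@[simp] lemma pathLen_single (f : V → V → ℕ∞) (a : V) : pathLen f [a] = 0 := rfl
lemma pathLen_cons (f : V → V → ℕ∞) (a b : V) (l : List V) :
    pathLen f (a :: b :: l) = f a b + pathLen f (b :: l) := by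
  simp [pathLen]

lemma isWalk_single (w : V → V → ℕ∞) (u : V) : IsWalk w u u [u] :=
  ⟨by simp, rfl, rfl, List.isChain_singleton u⟩

lemma isWalk_single_elim {w : V → V → ℕ∞} {u v a : V} (h : IsWalk w u v [a]) :
    a = u ∧ a = v := by
  obtain ⟨-, h1, h2, -⟩ := h
  simp_all

lemma isWalk_cons_cons {w : V → V → ℕ∞} {u v a b : V} {l : List V}
    (h : IsWalk w u v (a :: b :: l)) : a = u ∧ Adj w a b ∧ IsWalk w b v (b :: l) := by
  obtain ⟨-, h1, h2, h3⟩ := h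
  rw [List.getLast?_cons_cons] at h2
  unfold List.Chain' at h3; rw [List.isChain_cons_cons] at h3
  simp only [List.head?_cons, Option.some.injEq] at h1
  exact ⟨h1, h3.1, by simp, rfl, h2, h3.2⟩

lemma isWalk_cons {w : V → V → ℕ∞} {u b v : V} {p : List V}
    (hadj : Adj w u b) (hp : IsWalk w b v p) : IsWalk w u v (u :: p) := by
  obtain ⟨h0, h1, h2, h3⟩ := hp
  obtain ⟨c, q, rfl⟩ := List.exists_cons_of_ne_nil h0
  simp only [List.head?_cons, Option.some.injEq] at h1
  subst h1
  exact ⟨by simp, rfl, by rwa [List.getLast?_cons_cons], List.isChain_cons_cons.mpr ⟨hadj, h3⟩⟩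

lemma pathLen_glue (f : V → V → ℕ∞) :
    ∀ (p : List V) (q : List V) (m : V), p.getLast? = some m → q.head? = some m →
      pathLen f (p ++ q.tail) = pathLen f p + pathLen f q
  | [], q, m, hp, _ => by simp at hp
  | [a], q, m, hp, hq => by
      obtain ⟨c, q', rfl⟩ := List.exists_cons_of_ne_nil (l := q) (fun h => by simp [h] at hq)
      simp only [List.head?_cons, Option.some.injEq] at hq
      simp only [List.getLast?_singleton, Option.some.injEq] at hp
      subst hp; subst hq
      simp [pathLen_cons]
  | a :: b :: p', q, m, hp, hq => by
      rw [List.getLast?_cons_cons] at hp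
      have ih := pathLen_glue f (b :: p') q m hp hq
      simp only [List.cons_append] at ih ⊢
      rw [pathLen_cons, pathLen_cons, ih, add_assoc]

lemma IsWalk.glue {w : V → V → ℕ∞} {u m v : V} {p q : List V}
    (hp : IsWalk w u m p) (hq : IsWalk w m v q) : IsWalk w u v (p ++ q.tail) := by
  obtain ⟨hpne, hph, hpl, hpc⟩ := hp
  obtain ⟨hqne, hqh, hql, hqc⟩ := hq
  obtain ⟨c, q', rfl⟩ := List.exists_cons_of_ne_nil hqne
  simp only [List.head?_cons, Option.some.injEq] at hqh
  subst hqh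
  refine ⟨by simp [hpne], by rwa [List.head?_append_of_ne_nil _ hpne], ?_, ?_⟩
  · cases q' with
    | nil =>
      simp only [List.getLast?_singleton, Option.some.injEq] at hql
      subst hql; simpa using hpl
    | cons d q'' =>
      rw [List.getLast?_cons_cons] at hql
      simp only [List.tail_cons]
      rw [List.getLast?_append_cons]
      exact hql
  · refine List.IsChain.append hpc (List.isChain_cons.mp hqc).2 ?_
    intro x hx y hy
    rw [hpl] at hx
    simp only [Option.mem_def, Option.some.injEq] at hx
    subst hx
    exact (List.isChain_cons.mp hqc).1 y hy

lemma wdist_le {w : V → V → ℕ∞} {u v : V} {p : List V} (h : IsWalk w u v p) :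
    wdist w u v ≤ pathLen w p := iInf_le (fun q : {p : List V // IsWalk w u v p} => pathLen w q.1) ⟨p, h⟩

lemma le_wdist {w : V → V → ℕ∞} {u v : V} {c : ℕ∞}
    (h : ∀ p, IsWalk w u v p → c ≤ pathLen w p) : c ≤ wdist w u v :=
  le_iInf fun p => h p.1 p.2

@[simp] lemma wdist_self (w : V → V → ℕ∞) (v : V) : wdist w v v = 0 :=
  le_antisymm (by simpa using wdist_le (isWalk_single w v)) zero_le

lemma wdist_exists {w : V → V → ℕ∞} {u v : V} (h : wdist w u v ≠ ⊤) :
    ∃ p, IsWalk w u v p ∧ pathLen w p = wdist w u v := by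
  obtain ⟨⟨p, hp⟩, he⟩ := exists_eq_iInf' _ h
  exact ⟨p, hp, he⟩

lemma wdist_le_edge {w : V → V → ℕ∞} {u v : V} (h : u ≠ v) : wdist w u v ≤ w u v := by
  by_cases hw : w u v = ⊤
  · simp [hw]
  · have hwalk : IsWalk w u v [u, v] :=
      ⟨by simp, rfl, rfl, List.isChain_pair.mpr ⟨h, lt_top_iff_ne_top.mpr hw⟩⟩
    simpa [pathLen_cons] using wdist_le hwalk

lemma wdist_triangle (w : V → V → ℕ∞) (u m v : V) :
    wdist w u v ≤ wdist w u m + wdist w m v := by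
  by_cases h1 : wdist w u m = ⊤
  · simp [h1]
  by_cases h2 : wdist w m v = ⊤
  · simp [h2]
  obtain ⟨p, hp, hpe⟩ := wdist_exists h1
  obtain ⟨q, hq, hqe⟩ := wdist_exists h2
  calc wdist w u v ≤ pathLen w (p ++ q.tail) := wdist_le (hp.glue hq)
    _ = pathLen w p + pathLen w q := pathLen_glue w p q m hp.2.2.1 hq.2.1
    _ = _ := by rw [hpe, hqe]

lemma pathLen_concat (f : V → V → ℕ∞) (p : List V) (m a : V) (hp : p.getLast? = some m) :
    pathLen f (p ++ [a]) = pathLen f p + f m a := by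
  have := pathLen_glue f p [m, a] m hp rfl
  simpa [pathLen_cons] using this

lemma pathLen_reverse {w : V → V → ℕ∞} (hsym : ∀ a b, w a b = w b a) :
    ∀ p : List V, pathLen w p.reverse = pathLen w p
  | [] => rfl
  | [_] => rfl
  | a :: b :: l => by
      have ih := pathLen_reverse hsym (b :: l)
      have hlast : (b :: l).reverse.getLast? = some b := by simp
      rw [show (a :: b :: l).reverse = (b :: l).reverse ++ [a] by simp]
      rw [pathLen_concat w _ b a hlast, ih, pathLen_cons, hsym b a, add_comm]

lemma IsWalk.reverse {w : V → V → ℕ∞} {u v : V} {p : List V}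
    (hsym : ∀ a b, w a b = w b a) (h : IsWalk w u v p) : IsWalk w v u p.reverse := by
  refine ⟨by simp [h.1], by simp [h.2.2.1], by simp [h.2.1], ?_⟩
  unfold List.Chain'; rw [List.isChain_reverse]
  exact List.IsChain.imp (fun a b hab => ⟨hab.1.symm, by rw [hsym]; exact hab.2⟩) h.2.2.2

lemma wdist_comm {w : V → V → ℕ∞} (hsym : ∀ a b, w a b = w b a) (u v : V) :
    wdist w u v = wdist w v u := by
  have key : ∀ a b : V, wdist w a b ≤ wdist w b a := by
    intro a b
    refine le_wdist fun p hp => ?_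
    calc wdist w a b ≤ pathLen w p.reverse := wdist_le (hp.reverse hsym)
      _ = pathLen w p := pathLen_reverse hsym p
  exact le_antisymm (key u v) (key v u)

lemma wdist_le_of_chain {w f : V → V → ℕ∞} {R : V → V → Prop}
    (hR : ∀ a b, R a b → wdist w a b ≤ f a b) :
    ∀ (p : List V) (u v : V), p.head? = some u → p.getLast? = some v → p.Chain' R →
      wdist w u v ≤ pathLen f p
  | [], u, v, h1, _, _ => by simp at h1
  | [a], u, v, h1, h2, _ => by
      simp only [List.head?_cons, Option.some.injEq] at h1
      simp only [List.getLast?_singleton, Option.some.injEq] at h2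
      subst h1; subst h2; simp
  | a :: b :: l, u, v, h1, h2, h3 => by
      simp only [List.head?_cons, Option.some.injEq] at h1
      subst h1
      rw [List.getLast?_cons_cons] at h2
      unfold List.Chain' at h3; rw [List.isChain_cons_cons] at h3
      calc wdist w a v ≤ wdist w a b + wdist w b v := wdist_triangle w a b v
        _ ≤ f a b + pathLen f (b :: l) :=
            add_le_add (hR a b h3.1) (wdist_le_of_chain hR (b :: l) b v rfl h2 h3.2)
        _ = pathLen f (a :: b :: l) := (pathLen_cons f a b l).symm

lemma wdist_mono_of_edges {w w' : V → V → ℕ∞}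
    (hR : ∀ a b, Adj w' a b → wdist w a b ≤ w' a b) (u v : V) :
    wdist w u v ≤ wdist w' u v := by
  refine le_wdist fun p hp => ?_
  exact wdist_le_of_chain hR p u v hp.2.1 hp.2.2.1 hp.2.2.2

lemma wdist_peel {w : V → V → ℕ∞} {u v : V} (huv : u ≠ v) (hne : wdist w u v ≠ ⊤) :
    ∃ u', Adj w u u' ∧ w u u' + wdist w u' v ≤ wdist w u v := by
  obtain ⟨p, hp, hlen⟩ := wdist_exists hne
  match p, hp with
  | [], hp => exact absurd rfl hp.1
  | [a], hp =>
    obtain ⟨rfl, rfl⟩ := isWalk_single_elim hp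
    exact absurd rfl huv
  | a :: b :: l, hp =>
    obtain ⟨rfl, hadj, hw⟩ := isWalk_cons_cons hp
    refine ⟨b, hadj, ?_⟩
    rw [← hlen, pathLen_cons]
    exact add_le_add_right (wdist_le hw) _

section Hier
variable {k : ℕ} (H : KLevelHierarchy V k)

lemma enat_exists_coe {x : ℕ∞} (h : x ≠ ⊤) : ∃ m : ℕ, x = (m : ℕ∞) := by
  lift x to ℕ using h
  exact ⟨x, rfl⟩

lemma klevel_mem (v : V) :
    (1 ≤ klevel H v ∧ klevel H v < k ∧ v ∈ H.L (klevel H v)) ∨ klevel H v = k := by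
  have h : sInf {i | (1 ≤ i ∧ i < k ∧ v ∈ H.L i) ∨ i = k} ∈
      {i | (1 ≤ i ∧ i < k ∧ v ∈ H.L i) ∨ i = k} :=
    Nat.sInf_mem ⟨k, Or.inr rfl⟩
  exact h

lemma one_le_klevel (v : V) : 1 ≤ klevel H v := by
  have h2 := H.two_le
  rcases klevel_mem H v with h | h
  · exact h.1
  · omega

lemma klevel_le (v : V) : klevel H v ≤ k := Nat.sInf_le (Or.inr rfl)

lemma klevel_eq_of_mem {i : ℕ} {v : V} (h1 : 1 ≤ i) (hik : i < k) (hv : v ∈ H.L i) :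
    klevel H v = i := by
  refine le_antisymm (Nat.sInf_le (Or.inl ⟨h1, hik, hv⟩)) ?_
  rcases klevel_mem H v with h | h
  · by_contra hc
    push_neg at hc
    exact (H.disj (klevel H v) i h.1 h.2.1 h1 hik (by omega) v h.2.2) hv
  · omega

lemma klevel_eq_k {v : V} (hv : v ∈ VsetOf H.L k) : klevel H v = k := by
  rcases klevel_mem H v with h | h
  · exact absurd h.2.2 (hv _ h.1 h.2.1)
  · exact h

lemma le_klevel_of_vset {i : ℕ} {v : V} (hik : i ≤ k) (hv : v ∈ VsetOf H.L i) :
    i ≤ klevel H v := by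
  rcases klevel_mem H v with h | h
  · by_contra hc
    push_neg at hc
    exact (hv _ h.1 hc) h.2.2
  · omega

lemma mem_vset_succ {i : ℕ} {v : V} (hv : v ∈ VsetOf H.L i) (hL : v ∉ H.L i) :
    v ∈ VsetOf H.L (i + 1) := by
  intro j h1 h2
  rcases Nat.lt_succ_iff_lt_or_eq.mp h2 with h | h
  · exact hv j h1 h
  · subst h; exact hL

lemma adj_vset {i : ℕ} (h1 : 1 ≤ i) (hk : i ≤ k) {a b : V} (hadj : Adj (H.w i) a b) :
    a ∈ VsetOf H.L i ∧ b ∈ VsetOf H.L i := by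
  by_contra hc
  have h : a ∉ VsetOf H.L i ∨ b ∉ VsetOf H.L i := by tauto
  exact absurd (H.supported i h1 hk a b h) hadj.2.ne

lemma wdist_one_le (i : ℕ) (h1 : 1 ≤ i) : i ≤ k → ∀ a b : V,
    wdist (H.w 1) a b ≤ H.w i a b := by
  induction i, h1 using Nat.le_induction with
  | base =>
    intro _ a b
    rcases eq_or_ne a b with rfl | hab
    · simp
    · exact wdist_le_edge hab
  | succ i hi ih =>
    intro hk a b
    rcases eq_or_ne a b with rfl | hab
    · simp
    by_cases hV : a ∈ VsetOf H.L (i + 1) ∧ b ∈ VsetOf H.L (i + 1)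
    · have haug := H.aug (i + 1) (by omega) hk a b hab hV.1 hV.2
      simp only [Nat.add_sub_cancel] at haug
      rw [haug]
      refine le_min (ih (by omega) a b) ?_
      refine le_iInf fun x => le_iInf fun _ => ?_
      exact (wdist_triangle _ a x b).trans (add_le_add (ih (by omega) a x) (ih (by omega) x b))
    · have h : a ∉ VsetOf H.L (i + 1) ∨ b ∉ VsetOf H.L (i + 1) := by tauto
      rw [H.supported (i + 1) (by omega) hk a b h]
      exact le_top

lemma kAsc_single (v : V) : kIsAscending H v v [v] :=
  ⟨by simp, rfl, rfl, List.isChain_singleton v⟩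

lemma kAnc_self (v : V) : v ∈ kAnc H v := ⟨[v], kAsc_single H v⟩

lemma kAncDist_le {v u : V} {p : List V} (h : kIsAscending H v u p) :
    kAncDist H v u ≤ pathLen (fun a b => H.w (klevel H a) a b) p := iInf_le (fun q : {p : List V // kIsAscending H v u p} =>
      pathLen (fun a b => H.w (klevel H a) a b) q.1) ⟨p, h⟩

@[simp] lemma kAncDist_self (v : V) : kAncDist H v v = 0 :=
  le_antisymm (by simpa using kAncDist_le H (kAsc_single H v)) zero_le

lemma kAncDist_exists {v u : V} (h : u ∈ kAnc H v) :
    ∃ p, kIsAscending H v u p ∧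
      pathLen (fun a b => H.w (klevel H a) a b) p = kAncDist H v u := by
  by_cases htop : kAncDist H v u = ⊤
  · obtain ⟨p, hp⟩ := h
    exact ⟨p, hp, le_antisymm (by rw [htop]; exact le_top) (kAncDist_le H hp)⟩
  · obtain ⟨⟨p, hp⟩, he⟩ := exists_eq_iInf' _ htop
    exact ⟨p, hp, he⟩

lemma wdist_le_kAncDist (v u : V) : wdist (H.w 1) v u ≤ kAncDist H v u := by
  refine le_iInf fun q => ?_
  exact wdist_le_of_chain
    (fun a b _ => wdist_one_le H (klevel H a) (one_le_klevel H a) (klevel_le H a) a b)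
    q.1 v u q.2.2.1 q.2.2.2.1 q.2.2.2.2

lemma kAnc_lift {a b u : V} (h : kAscStep H a b) (hu : u ∈ kAnc H b) :
    u ∈ kAnc H a ∧ kAncDist H a u ≤ H.w (klevel H a) a b + kAncDist H b u := by
  obtain ⟨p, hp, hlen⟩ := kAncDist_exists H hu
  obtain ⟨h0, h1, h2, h3⟩ := hp
  obtain ⟨c, q, rfl⟩ := List.exists_cons_of_ne_nil h0
  simp only [List.head?_cons, Option.some.injEq] at h1
  subst h1
  have hasc : kIsAscending H a u (a :: c :: q) :=
    ⟨by simp, rfl, by rwa [List.getLast?_cons_cons], List.isChain_cons_cons.mpr ⟨h, h3⟩⟩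
  refine ⟨⟨_, hasc⟩, ?_⟩
  calc kAncDist H a u ≤ pathLen (fun x y => H.w (klevel H x) x y) (a :: c :: q) :=
        kAncDist_le H hasc
    _ = H.w (klevel H a) a c + pathLen (fun x y => H.w (klevel H x) x y) (c :: q) :=
        pathLen_cons _ a c q
    _ = _ := by rw [hlen]

lemma wdist_succ_le (i : ℕ) (h1 : 1 ≤ i) (hik : i < k) {u v : V}
    (hu : u ∈ VsetOf H.L (i + 1)) (hv : v ∈ VsetOf H.L (i + 1)) :
    wdist (H.w (i + 1)) u v ≤ wdist (H.w i) u v := by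
  have main : ∀ n : ℕ, ∀ (p : List V) (u : V), p.length ≤ n → IsWalk (H.w i) u v p →
      u ∈ VsetOf H.L (i + 1) → wdist (H.w (i + 1)) u v ≤ pathLen (H.w i) p := by
    intro n
    induction n with
    | zero =>
      intro p u hlen hp _
      rw [List.length_eq_zero_iff.mp (Nat.le_zero.mp hlen)] at hp
      exact absurd rfl hp.1
    | succ n ih =>
      intro p u hlen hp hu
      match p, hp with
      | [], hp => exact absurd rfl hp.1
      | [a], hp =>
        obtain ⟨rfl, rfl⟩ := isWalk_single_elim hp
        simp
      | a :: b :: l, hp =>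
        obtain ⟨rfl, hadj, hw⟩ := isWalk_cons_cons hp
        have hbV : b ∈ VsetOf H.L i := (adj_vset H h1 (by omega) hadj).2
        by_cases hbL : b ∈ H.L i
        · match l, hw with
          | [], hw =>
            obtain ⟨-, rfl⟩ := isWalk_single_elim hw
            exact absurd hbL (hv i h1 (by omega))
          | c :: l', hw =>
            obtain ⟨-, hadj2, hw2⟩ := isWalk_cons_cons hw
            have hcV : c ∈ VsetOf H.L i := (adj_vset H h1 (by omega) hadj2).2
            have hcL : c ∉ H.L i := fun hcL => H.indep i h1 hik b hbL c hcL hadj2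
            have hcV1 : c ∈ VsetOf H.L (i + 1) := mem_vset_succ H hcV hcL
            have htail : wdist (H.w (i + 1)) c v ≤ pathLen (H.w i) (c :: l') :=
              ih (c :: l') c (by simp at hlen ⊢; omega) hw2 hcV1
            by_cases hac : a = c
            · subst hac
              refine htail.trans ?_
              rw [pathLen_cons, pathLen_cons]
              exact le_add_self.trans le_add_self
            · have hedge : H.w (i + 1) a c ≤ H.w i a b + H.w i b c := by
                have haug := H.aug (i + 1) (by omega) (by omega) a c hac hu hcV1
                simp only [Nat.add_sub_cancel] at haug
                rw [haug]
                exact (min_le_right _ _).trans (iInf₂_le b hbL)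
              calc wdist (H.w (i + 1)) a v
                  ≤ wdist (H.w (i + 1)) a c + wdist (H.w (i + 1)) c v :=
                    wdist_triangle _ a c v
                _ ≤ H.w (i + 1) a c + pathLen (H.w i) (c :: l') :=
                    add_le_add (wdist_le_edge hac) htail
                _ ≤ H.w i a b + H.w i b c + pathLen (H.w i) (c :: l') :=
                    add_le_add_left hedge _
                _ = pathLen (H.w i) (a :: b :: c :: l') := by
                    rw [pathLen_cons, pathLen_cons, add_assoc]
        · have hbV1 : b ∈ VsetOf H.L (i + 1) := mem_vset_succ H hbV hbL
          have hedge : H.w (i + 1) a b ≤ H.w i a b := by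
            have haug := H.aug (i + 1) (by omega) (by omega) a b hadj.1 hu hbV1
            simp only [Nat.add_sub_cancel] at haug
            rw [haug]
            exact min_le_left _ _
          have htail := ih (b :: l) b (by simp at hlen ⊢; omega) hw hbV1
          calc wdist (H.w (i + 1)) a v
              ≤ wdist (H.w (i + 1)) a b + wdist (H.w (i + 1)) b v := wdist_triangle _ a b v
            _ ≤ H.w i a b + pathLen (H.w i) (b :: l) :=
                add_le_add ((wdist_le_edge hadj.1).trans hedge) htail
            _ = pathLen (H.w i) (a :: b :: l) := (pathLen_cons _ a b l).symm
  refine le_wdist fun p hp => main p.length p u le_rfl hp hu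

noncomputable def qval (H : KLevelHierarchy V k) (s t : V) : ℕ∞ :=
  min (⨅ x ∈ kAnc H s ∩ kAnc H t, (kAncDist H s x + kAncDist H t x))
    (⨅ x ∈ kAnc H s ∩ VsetOf H.L k, ⨅ y ∈ kAnc H t ∩ VsetOf H.L k,
      (kAncDist H s x + wdist (H.w k) x y + kAncDist H t y))

lemma qval_le_top {u v : V} (hu : u ∈ VsetOf H.L k) (hv : v ∈ VsetOf H.L k) :
    qval H u v ≤ wdist (H.w k) u v := by
  refine (min_le_right _ _).trans ?_
  refine (iInf₂_le u ⟨kAnc_self H u, hu⟩).trans ?_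
  refine (iInf₂_le v ⟨kAnc_self H v, hv⟩).trans ?_
  simp

lemma qval_le_zero (u : V) : qval H u u ≤ 0 := by
  refine (min_le_left _ _).trans ?_
  refine (iInf₂_le u ⟨kAnc_self H u, kAnc_self H u⟩).trans ?_
  simp

lemma qval_lift_left {u u' v : V} (h : kAscStep H u u') :
    qval H u v ≤ H.w (klevel H u) u u' + qval H u' v := by
  set c := H.w (klevel H u) u u' with hc
  have hA : (⨅ x ∈ kAnc H u ∩ kAnc H v, (kAncDist H u x + kAncDist H v x)) ≤
      c + ⨅ x ∈ kAnc H u' ∩ kAnc H v, (kAncDist H u' x + kAncDist H v x) := by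
    by_cases htop : (⨅ x ∈ kAnc H u' ∩ kAnc H v, (kAncDist H u' x + kAncDist H v x)) = ⊤
    · rw [htop]; simp
    obtain ⟨x, hx, hxe⟩ := exists_eq_biInf _ htop
    obtain ⟨hanc, hd⟩ := kAnc_lift H h hx.1
    calc (⨅ x ∈ kAnc H u ∩ kAnc H v, (kAncDist H u x + kAncDist H v x))
        ≤ kAncDist H u x + kAncDist H v x := iInf₂_le x ⟨hanc, hx.2⟩
      _ ≤ (c + kAncDist H u' x) + kAncDist H v x := add_le_add_left hd _
      _ = c + (kAncDist H u' x + kAncDist H v x) := add_assoc _ _ _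
      _ = _ := by rw [hxe]
  have hB : (⨅ x ∈ kAnc H u ∩ VsetOf H.L k, ⨅ y ∈ kAnc H v ∩ VsetOf H.L k,
        (kAncDist H u x + wdist (H.w k) x y + kAncDist H v y)) ≤
      c + ⨅ x ∈ kAnc H u' ∩ VsetOf H.L k, ⨅ y ∈ kAnc H v ∩ VsetOf H.L k,
        (kAncDist H u' x + wdist (H.w k) x y + kAncDist H v y) := by
    by_cases htop : (⨅ x ∈ kAnc H u' ∩ VsetOf H.L k, ⨅ y ∈ kAnc H v ∩ VsetOf H.L k,
        (kAncDist H u' x + wdist (H.w k) x y + kAncDist H v y)) = ⊤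
    · rw [htop]; simp
    obtain ⟨x, hx, hxe⟩ := exists_eq_biInf _ htop
    have htop2 : (⨅ y ∈ kAnc H v ∩ VsetOf H.L k,
        (kAncDist H u' x + wdist (H.w k) x y + kAncDist H v y)) ≠ ⊤ := by
      rw [hxe]; exact htop
    obtain ⟨y, hy, hye⟩ := exists_eq_biInf _ htop2
    obtain ⟨hanc, hd⟩ := kAnc_lift H h hx.1
    calc (⨅ x ∈ kAnc H u ∩ VsetOf H.L k, ⨅ y ∈ kAnc H v ∩ VsetOf H.L k,
          (kAncDist H u x + wdist (H.w k) x y + kAncDist H v y))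
        ≤ kAncDist H u x + wdist (H.w k) x y + kAncDist H v y :=
          (iInf₂_le x ⟨hanc, hx.2⟩).trans (iInf₂_le y hy)
      _ ≤ (c + kAncDist H u' x) + wdist (H.w k) x y + kAncDist H v y :=
          add_le_add_left (add_le_add_left hd _) _
      _ = c + (kAncDist H u' x + wdist (H.w k) x y + kAncDist H v y) := by
          rw [add_assoc c, add_assoc c]
      _ = _ := by rw [hye, hxe]
  show _ ≤ c + qval H u' v
  unfold qval
  rw [← min_add_add_left]
  exact le_min ((min_le_left _ _).trans hA) ((min_le_right _ _).trans hB)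

lemma qval_lift_right {u v v' : V} (h : kAscStep H v v') :
    qval H u v ≤ H.w (klevel H v) v v' + qval H u v' := by
  set c := H.w (klevel H v) v v' with hc
  have hA : (⨅ x ∈ kAnc H u ∩ kAnc H v, (kAncDist H u x + kAncDist H v x)) ≤
      c + ⨅ x ∈ kAnc H u ∩ kAnc H v', (kAncDist H u x + kAncDist H v' x) := by
    by_cases htop : (⨅ x ∈ kAnc H u ∩ kAnc H v', (kAncDist H u x + kAncDist H v' x)) = ⊤
    · rw [htop]; simp
    obtain ⟨x, hx, hxe⟩ := exists_eq_biInf _ htop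
    obtain ⟨hanc, hd⟩ := kAnc_lift H h hx.2
    calc (⨅ x ∈ kAnc H u ∩ kAnc H v, (kAncDist H u x + kAncDist H v x))
        ≤ kAncDist H u x + kAncDist H v x := iInf₂_le x ⟨hx.1, hanc⟩
      _ ≤ kAncDist H u x + (c + kAncDist H v' x) := add_le_add_right hd _
      _ = c + (kAncDist H u x + kAncDist H v' x) := add_left_comm _ c _
      _ = _ := by rw [hxe]
  have hB : (⨅ x ∈ kAnc H u ∩ VsetOf H.L k, ⨅ y ∈ kAnc H v ∩ VsetOf H.L k,
        (kAncDist H u x + wdist (H.w k) x y + kAncDist H v y)) ≤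
      c + ⨅ x ∈ kAnc H u ∩ VsetOf H.L k, ⨅ y ∈ kAnc H v' ∩ VsetOf H.L k,
        (kAncDist H u x + wdist (H.w k) x y + kAncDist H v' y) := by
    by_cases htop : (⨅ x ∈ kAnc H u ∩ VsetOf H.L k, ⨅ y ∈ kAnc H v' ∩ VsetOf H.L k,
        (kAncDist H u x + wdist (H.w k) x y + kAncDist H v' y)) = ⊤
    · rw [htop]; simp
    obtain ⟨x, hx, hxe⟩ := exists_eq_biInf _ htop
    have htop2 : (⨅ y ∈ kAnc H v' ∩ VsetOf H.L k,
        (kAncDist H u x + wdist (H.w k) x y + kAncDist H v' y)) ≠ ⊤ := by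
      rw [hxe]; exact htop
    obtain ⟨y, hy, hye⟩ := exists_eq_biInf _ htop2
    obtain ⟨hanc, hd⟩ := kAnc_lift H h hy.1
    calc (⨅ x ∈ kAnc H u ∩ VsetOf H.L k, ⨅ y ∈ kAnc H v ∩ VsetOf H.L k,
          (kAncDist H u x + wdist (H.w k) x y + kAncDist H v y))
        ≤ kAncDist H u x + wdist (H.w k) x y + kAncDist H v y :=
          (iInf₂_le x hx).trans (iInf₂_le y ⟨hanc, hy.2⟩)
      _ ≤ (kAncDist H u x + wdist (H.w k) x y) + (c + kAncDist H v' y) :=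
          add_le_add_right hd _
      _ = c + (kAncDist H u x + wdist (H.w k) x y + kAncDist H v' y) :=
          add_left_comm _ c _
      _ = _ := by rw [hye, hxe]
  show _ ≤ c + qval H u v'
  unfold qval
  rw [← min_add_add_left]
  exact le_min ((min_le_left _ _).trans hA) ((min_le_right _ _).trans hB)

lemma qval_le_wdist (j : ℕ) : ∀ i, i + j = k → 1 ≤ i → ∀ u v : V,
    u ∈ VsetOf H.L i → v ∈ VsetOf H.L i → qval H u v ≤ wdist (H.w i) u v := by
  induction j with
  | zero =>
    intro i hik _ u v hu hv
    have : i = k := by omega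
    subst this
    exact qval_le_top H hu hv
  | succ j ihj =>
    intro i hik h1 u v hu hv
    have hik' : i < k := by omega
    have main : ∀ n : ℕ, ∀ u v : V, u ∈ VsetOf H.L i → v ∈ VsetOf H.L i →
        wdist (H.w i) u v ≤ (n : ℕ∞) → qval H u v ≤ wdist (H.w i) u v := by
      intro n
      induction n using Nat.strong_induction_on with
      | _ n IH =>
        intro u v hu hv hn
        rcases eq_or_ne u v with rfl | huv
        · rw [wdist_self]; exact qval_le_zero H u
        have hne : wdist (H.w i) u v ≠ ⊤ := (hn.trans_lt (ENat.coe_lt_top n)).ne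
        have hsym := (H.wgraph i h1 (by omega)).1
        by_cases huL : u ∈ H.L i
        · obtain ⟨u', hadj, hpeel⟩ := wdist_peel huv hne
          have hlev : klevel H u = i := klevel_eq_of_mem H h1 hik' huL
          have hu'V : u' ∈ VsetOf H.L i := (adj_vset H h1 (by omega) hadj).2
          have hu'L : u' ∉ H.L i := fun hc => H.indep i h1 hik' u huL u' hc hadj
          have hu'V1 : u' ∈ VsetOf H.L (i + 1) := mem_vset_succ H hu'V hu'L
          have hstep : kAscStep H u u' := by
            refine ⟨?_, ?_⟩
            · rw [hlev]
              exact lt_of_lt_of_le (Nat.lt_succ_self i) (le_klevel_of_vset H (by omega) hu'V1)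
            · rw [hlev]; exact hadj
          have h1le : 1 ≤ H.w i u u' := (H.wgraph i h1 (by omega)).2 u u' hadj.1
          have hmn : wdist (H.w i) u' v + 1 ≤ (n : ℕ∞) := by
            calc wdist (H.w i) u' v + 1 ≤ wdist (H.w i) u' v + H.w i u u' :=
                  add_le_add_right h1le _
              _ = H.w i u u' + wdist (H.w i) u' v := add_comm _ _
              _ ≤ wdist (H.w i) u v := hpeel
              _ ≤ n := hn
          have hfin : wdist (H.w i) u' v ≠ ⊤ := by
            intro hc; rw [hc] at hmn; simp at hmn
          obtain ⟨m, hm⟩ := enat_exists_coe hfin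
          have hmlt : m < n := by
            rw [hm] at hmn
            have : m + 1 ≤ n := by exact_mod_cast hmn
            omega
          have hrec := IH m hmlt u' v hu'V hv (le_of_eq hm)
          calc qval H u v ≤ H.w (klevel H u) u u' + qval H u' v := qval_lift_left H hstep
            _ ≤ H.w i u u' + wdist (H.w i) u' v := by
                rw [hlev]; exact add_le_add_right hrec _
            _ ≤ wdist (H.w i) u v := hpeel
        · by_cases hvL : v ∈ H.L i
          · have hcomm := wdist_comm hsym u v
            have hne' : wdist (H.w i) v u ≠ ⊤ := by rw [← hcomm]; exact hne
            obtain ⟨v', hadj, hpeel⟩ := wdist_peel (Ne.symm huv) hne'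
            have hlev : klevel H v = i := klevel_eq_of_mem H h1 hik' hvL
            have hv'V : v' ∈ VsetOf H.L i := (adj_vset H h1 (by omega) hadj).2
            have hv'L : v' ∉ H.L i := fun hc => H.indep i h1 hik' v hvL v' hc hadj
            have hv'V1 : v' ∈ VsetOf H.L (i + 1) := mem_vset_succ H hv'V hv'L
            have hstep : kAscStep H v v' := by
              refine ⟨?_, ?_⟩
              · rw [hlev]
                exact lt_of_lt_of_le (Nat.lt_succ_self i) (le_klevel_of_vset H (by omega) hv'V1)
              · rw [hlev]; exact hadj
            have h1le : 1 ≤ H.w i v v' := (H.wgraph i h1 (by omega)).2 v v' hadj.1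
            have hmn : wdist (H.w i) u v' + 1 ≤ (n : ℕ∞) := by
              calc wdist (H.w i) u v' + 1 ≤ wdist (H.w i) u v' + H.w i v v' :=
                    add_le_add_right h1le _
                _ = H.w i v v' + wdist (H.w i) u v' := add_comm _ _
                _ = H.w i v v' + wdist (H.w i) v' u := by rw [wdist_comm hsym u v']
                _ ≤ wdist (H.w i) v u := hpeel
                _ = wdist (H.w i) u v := hcomm.symm
                _ ≤ n := hn
            have hfin : wdist (H.w i) u v' ≠ ⊤ := by
              intro hc; rw [hc] at hmn; simp at hmn
            obtain ⟨m, hm⟩ := enat_exists_coe hfin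
            have hmlt : m < n := by
              rw [hm] at hmn
              have : m + 1 ≤ n := by exact_mod_cast hmn
              omega
            have hrec := IH m hmlt u v' hu hv'V (le_of_eq hm)
            calc qval H u v ≤ H.w (klevel H v) v v' + qval H u v' := qval_lift_right H hstep
              _ ≤ H.w i v v' + wdist (H.w i) u v' := by
                  rw [hlev]; exact add_le_add_right hrec _
              _ = H.w i v v' + wdist (H.w i) v' u := by rw [wdist_comm hsym u v']
              _ ≤ wdist (H.w i) v u := hpeel
              _ = wdist (H.w i) u v := hcomm.symm
          · have hu1 := mem_vset_succ H hu huL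
            have hv1 := mem_vset_succ H hv hvL
            exact (ihj (i + 1) (by omega) (by omega) u v hu1 hv1).trans
              (wdist_succ_le H i h1 hik' hu1 hv1)
    by_cases htop : wdist (H.w i) u v = ⊤
    · rw [htop]; exact le_top
    obtain ⟨m, hm⟩ := enat_exists_coe htop
    exact main m u v hu hv (le_of_eq hm)

lemma wdist_le_qval (s t : V) : wdist (H.w 1) s t ≤ qval H s t := by
  have h1k : 1 ≤ k := le_trans one_le_two H.two_le
  have hsym1 := (H.wgraph 1 le_rfl h1k).1
  refine le_min ?_ ?_
  · refine le_iInf fun x => le_iInf fun _ => ?_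
    calc wdist (H.w 1) s t ≤ wdist (H.w 1) s x + wdist (H.w 1) x t := wdist_triangle _ s x t
      _ ≤ kAncDist H s x + kAncDist H t x :=
          add_le_add (wdist_le_kAncDist H s x)
            (by rw [wdist_comm hsym1 x t]; exact wdist_le_kAncDist H t x)
  · refine le_iInf fun x => le_iInf fun _ => le_iInf fun y => le_iInf fun _ => ?_
    have hk1 : wdist (H.w 1) x y ≤ wdist (H.w k) x y :=
      wdist_mono_of_edges (fun a b _ => wdist_one_le H k h1k le_rfl a b) x y
    calc wdist (H.w 1) s t ≤ wdist (H.w 1) s x + wdist (H.w 1) x t := wdist_triangle _ s x t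
      _ ≤ wdist (H.w 1) s x + (wdist (H.w 1) x y + wdist (H.w 1) y t) :=
          add_le_add_right (wdist_triangle _ x y t) _
      _ ≤ kAncDist H s x + (wdist (H.w k) x y + kAncDist H t y) :=
          add_le_add (wdist_le_kAncDist H s x)
            (add_le_add hk1 (by rw [wdist_comm hsym1 y t]; exact wdist_le_kAncDist H t y))
      _ = kAncDist H s x + wdist (H.w k) x y + kAncDist H t y := (add_assoc _ _ _).symm

end Hier
end AuxLemmas

/-- in a `k`-level vertex hierarchy the distance is the minimum of
the pure-label term and the term going through the top-level graph `G_k`. -/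
theorem klevel_query_min [Fintype V] {k : ℕ} (H : KLevelHierarchy V k)
    (s t : V) :
    wdist (H.w 1) s t =
      min (⨅ x ∈ kAnc H s ∩ kAnc H t, (kAncDist H s x + kAncDist H t x))
        (⨅ x ∈ kAnc H s ∩ VsetOf H.L k, ⨅ y ∈ kAnc H t ∩ VsetOf H.L k,
          (kAncDist H s x + wdist (H.w k) x y + kAncDist H t y)) := by
  have h2k := H.two_le
  refine le_antisymm (wdist_le_qval H s t) ?_
  have hmem : ∀ z : V, z ∈ VsetOf H.L 1 := by
    intro z j hj1 hj2
    exact absurd hj1 (by omega)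
  exact qval_le_wdist H (k - 1) 1 (by omega) le_rfl s t (hmem s) (hmem t)

end ISLabel
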